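/- Let K be any commutative ring. The products σ_{r_1}(w_1)···σ_{r_d}(w_d), where {w_1,...,w_d; r_1,...,r_d} ranges over multisets of distinct nonempty monomials w_i in x(1),...,x(m) with multiplicities r_i satisfying r_1 + ··· + r_d ≤ n, form a free K-module basis of the ring of multisymmetric functions K[V^m]^{S_n}. -/

import Mathlib

open MvPolynomial

/-- `σ_l(w)`: the `l`-th elementary symmetric polynomial of the substitutions
`w_{⟨1⟩}, …, w_{⟨n⟩}` of the monomial `w = x(1)^{a 1} ⋯ x(m)^{a m}`, where
`w_{⟨j⟩} = ∏_i x(i)_j^{a i}`. -/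
noncomputable def sigmaMon (K : Type*) [CommRing K] (m n : ℕ) (l : ℕ) (a : Fin m → ℕ) :
    MvPolynomial (Fin m × Fin n) K :=
  ∑ S ∈ Finset.univ.powersetCard l, ∏ j ∈ S, ∏ i : Fin m, X (i, j) ^ a i

/-- `f` is invariant under the `S_n`-action permuting the index `j`. -/
def IsMultiSymm {K : Type*} [CommRing K] {m n : ℕ} (f : MvPolynomial (Fin m × Fin n) K) :
    Prop :=
  ∀ σ : Equiv.Perm (Fin n), rename (fun p : Fin m × Fin n => (p.1, σ p.2)) f = f


namespace SigmaBasisAux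



/-- If two tuples have the same multiset of values, they differ by a permutation. -/
theorem exists_perm_comp : ∀ {n : ℕ} {α : Type*} {f g : Fin n → α},
    List.Perm (List.ofFn f) (List.ofFn g) → ∃ σ : Equiv.Perm (Fin n), g = f ∘ σ := by
  intro n
  induction n with
  | zero => intro α f g _; exact ⟨1, funext fun j => j.elim0⟩
  | succ n ih =>
    intro α f g h
    have hg0 : g 0 ∈ List.ofFn f := h.mem_iff.2 (by rw [List.mem_ofFn]; exact ⟨0, rfl⟩)
    obtain ⟨k, hk⟩ := List.mem_ofFn.1 hg0
    set τ : Equiv.Perm (Fin (n+1)) := Equiv.swap 0 k with hτ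
    have h2 : List.Perm (List.ofFn (f ∘ τ)) (List.ofFn g) := (Equiv.Perm.ofFn_comp_perm τ f).trans h
    have h0 : (f ∘ τ) 0 = g 0 := by simp [hτ, hk]
    rw [List.ofFn_succ, List.ofFn_succ, h0] at h2
    have h3 : List.Perm (List.ofFn (f ∘ τ ∘ Fin.succ)) (List.ofFn (g ∘ Fin.succ)) := by
      have := h2.cons_inv
      simpa [Function.comp_def] using this
    obtain ⟨σ', hσ'⟩ := ih h3
    refine ⟨(Equiv.Perm.decomposeFin.symm (0, σ')).trans τ, funext fun j => ?_⟩
    refine Fin.cases ?_ (fun i => ?_) j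
    · simpa [Equiv.Perm.decomposeFin_symm_apply_zero] using h0.symm
    · have := congrFun hσ' i
      simp only [Function.comp] at this ⊢
      rw [this]
      simp [Equiv.Perm.decomposeFin_symm_apply_succ]


variable {K : Type*} [CommRing K] {m n : ℕ}

/-- the `j`-th column of exponents of a monomial -/
def colOf (d : (Fin m × Fin n) →₀ ℕ) (j : Fin n) : Fin m → ℕ := fun i => d (i, j)

/-- the multiset of all columns -/
def colm (d : (Fin m × Fin n) →₀ ℕ) : Multiset (Fin m → ℕ) :=
  Multiset.map (colOf d) Finset.univ.val

/-- the multiset of nonzero columns -/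
def piD (d : (Fin m × Fin n) →₀ ℕ) : Multiset (Fin m → ℕ) :=
  (colm d).filter (fun a => a ≠ 0)

lemma colm_eq_ofFn (d : (Fin m × Fin n) →₀ ℕ) :
    colm d = (List.ofFn (colOf d) : Multiset (Fin m → ℕ)) := by
  simp [colm]

lemma card_colm (d : (Fin m × Fin n) →₀ ℕ) : Multiset.card (colm d) = n := by
  simp [colm_eq_ofFn]

lemma piD_card_le (d : (Fin m × Fin n) →₀ ℕ) : Multiset.card (piD d) ≤ n := by
  have := Multiset.card_le_card (Multiset.filter_le (fun a => a ≠ 0) (colm d))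
  rw [card_colm] at this
  exact this

lemma piD_nonzero (d : (Fin m × Fin n) →₀ ℕ) : ∀ a ∈ piD d, a ≠ 0 := fun _ ha =>
  (Multiset.mem_filter.1 ha).2

lemma colm_decomp (d : (Fin m × Fin n) →₀ ℕ) :
    colm d = piD d + Multiset.replicate (n - Multiset.card (piD d)) 0 := by
  classical
  have h1 : colm d = piD d + (colm d).filter (fun a => ¬ a ≠ 0) :=
    (Multiset.filter_add_not _ _).symm
  have h2 : (colm d).filter (fun a => ¬ a ≠ 0) = (colm d).filter (fun a => a = 0) := by
    apply Multiset.filter_congr; intro x _; simp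
  have h3 : (colm d).filter (fun a => a = 0) =
      Multiset.replicate (Multiset.count 0 (colm d)) 0 := Multiset.filter_eq' _ _
  have hcard : Multiset.card (piD d) + Multiset.count 0 (colm d) = n := by
    have := congrArg Multiset.card h1
    rw [Multiset.card_add, h2, h3, Multiset.card_replicate, card_colm] at this
    omega
  rw [h1, h2, h3]
  congr 1
  congr 1
  omega

lemma colm_eq_of_piD_eq {d d' : (Fin m × Fin n) →₀ ℕ} (h : piD d = piD d') :
    colm d = colm d' := by
  rw [colm_decomp d, colm_decomp d', h]

lemma exists_perm_of_piD_eq {d d' : (Fin m × Fin n) →₀ ℕ} (h : piD d = piD d') :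
    ∃ σ : Equiv.Perm (Fin n), ∀ p : Fin m × Fin n, d' p = d (p.1, σ p.2) := by
  have hc : colm d = colm d' := colm_eq_of_piD_eq h
  rw [colm_eq_ofFn, colm_eq_ofFn, Multiset.coe_eq_coe] at hc
  obtain ⟨σ, hσ⟩ := exists_perm_comp hc
  exact ⟨σ, fun p => by
    have := congrFun (congrFun hσ p.2) p.1
    simpa [colOf] using this⟩


/-- coefficients constant on `S_n`-orbits of monomials -/
def ConstOn (f : MvPolynomial (Fin m × Fin n) K) : Prop :=
  ∀ d d' : (Fin m × Fin n) →₀ ℕ, piD d = piD d' → coeff d f = coeff d' f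

lemma constOn_of_isMultiSymm {f : MvPolynomial (Fin m × Fin n) K} (hf : IsMultiSymm f) :
    ConstOn f := by
  intro d d' h
  obtain ⟨σ, hσ⟩ := exists_perm_of_piD_eq h
  set e : (Fin m × Fin n) ≃ (Fin m × Fin n) := Equiv.prodCongr (Equiv.refl _) σ⁻¹ with he
  have hd' : d' = Finsupp.mapDomain e d := by
    ext p
    rw [Finsupp.mapDomain_equiv_apply]
    have : e.symm p = (p.1, σ p.2) := rfl
    rw [this, hσ p]
  have hre : rename (⇑e) f = f := by
    have := hf σ⁻¹
    convert this using 2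
    rfl
  calc coeff d f = coeff (Finsupp.mapDomain e d) (rename (⇑e) f) :=
        (coeff_rename_mapDomain _ e.injective f d).symm
    _ = coeff d' f := by rw [hre, ← hd']

lemma constOn_sub {f g : MvPolynomial (Fin m × Fin n) K} (hf : ConstOn f) (hg : ConstOn g) :
    ConstOn (f - g) := fun d d' h => by
  simp only [coeff_sub, hf d d' h, hg d d' h]


/-- canonical monomial with column multiset `M` (padded by zeros) -/
noncomputable def dzero (M : Multiset (Fin m → ℕ)) : (Fin m × Fin n) →₀ ℕ :=
  Finsupp.equivFunOnFinite.symm fun p =>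
    (M.toList ++ List.replicate (n - Multiset.card M) 0).getD p.2 0 p.1

lemma colOf_dzero (M : Multiset (Fin m → ℕ)) (j : Fin n) :
    colOf (dzero M) j = (M.toList ++ List.replicate (n - Multiset.card M) 0).getD j 0 := by
  funext i
  simp [colOf, dzero]

lemma colm_dzero (M : Multiset (Fin m → ℕ)) (hM : Multiset.card M ≤ n) :
    colm (dzero M : (Fin m × Fin n) →₀ ℕ) = M + Multiset.replicate (n - Multiset.card M) 0 := by
  rw [colm_eq_ofFn]
  have hlen : (M.toList ++ List.replicate (n - Multiset.card M) 0).length = n := by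
    simp [Multiset.length_toList]; omega
  have : List.ofFn (colOf (dzero M : (Fin m × Fin n) →₀ ℕ)) = M.toList ++ List.replicate (n - Multiset.card M) 0 := by
    apply List.ext_get
    · simp [hlen]
    · intro i h1 h2
      rw [List.get_ofFn, colOf_dzero]
      simp only [List.getD_eq_getElem?_getD]
      rw [List.getElem?_eq_getElem (by simpa [hlen] using h2)]
      simp
  rw [this, ← Multiset.coe_add, Multiset.coe_toList, Multiset.coe_replicate]

lemma piD_dzero (M : Multiset (Fin m → ℕ)) (hM : Multiset.card M ≤ n)
    (h0 : ∀ a ∈ M, a ≠ 0) : piD (dzero M : (Fin m × Fin n) →₀ ℕ) = M := by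
  classical
  rw [piD, colm_dzero M hM, Multiset.filter_add]
  rw [Multiset.filter_eq_self.2 h0]
  rw [Multiset.filter_eq_nil.2 (by intro a ha; simp [Multiset.eq_of_mem_replicate ha])]
  simp



/-- the action of a column permutation on monomials -/
noncomputable def permDom (σ : Equiv.Perm (Fin n)) (d : (Fin m × Fin n) →₀ ℕ) :
    (Fin m × Fin n) →₀ ℕ :=
  Finsupp.equivMapDomain (Equiv.prodCongr (Equiv.refl (Fin m)) σ) d

lemma permDom_apply (σ : Equiv.Perm (Fin n)) (d : (Fin m × Fin n) →₀ ℕ) (p : Fin m × Fin n) :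
    permDom σ d p = d (p.1, σ⁻¹ p.2) := rfl

lemma colOf_permDom (σ : Equiv.Perm (Fin n)) (d : (Fin m × Fin n) →₀ ℕ) :
    colOf (permDom σ d) = colOf d ∘ ⇑σ⁻¹ := by
  funext j i; rfl

lemma piD_permDom (σ : Equiv.Perm (Fin n)) (d : (Fin m × Fin n) →₀ ℕ) :
    piD (permDom σ d) = piD d := by
  have : colm (permDom σ d) = colm d := by
    rw [colm_eq_ofFn, colm_eq_ofFn, colOf_permDom, Multiset.coe_eq_coe]
    exact Equiv.Perm.ofFn_comp_perm σ⁻¹ (colOf d)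
  rw [piD, piD, this]

open scoped Classical in
/-- the orbit of the canonical monomial of `M` -/
noncomputable def orbitF (M : Multiset (Fin m → ℕ)) : Finset ((Fin m × Fin n) →₀ ℕ) :=
  Finset.univ.image (fun σ : Equiv.Perm (Fin n) => permDom σ (dzero M))

lemma mem_orbitF {M : Multiset (Fin m → ℕ)} (hM : Multiset.card M ≤ n)
    (h0 : ∀ a ∈ M, a ≠ 0) (d : (Fin m × Fin n) →₀ ℕ) :
    d ∈ orbitF M ↔ piD d = M := by
  classical
  constructor
  · intro hd
    obtain ⟨σ, -, rfl⟩ := Finset.mem_image.1 hd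
    rw [piD_permDom, piD_dzero M hM h0]
  · intro hd
    have h1 : piD d = piD (dzero M : (Fin m × Fin n) →₀ ℕ) := by rw [hd, piD_dzero M hM h0]
    have hc := colm_eq_of_piD_eq h1
    rw [colm_eq_ofFn, colm_eq_ofFn, Multiset.coe_eq_coe] at hc
    obtain ⟨σ, hσ⟩ := exists_perm_comp hc
    refine Finset.mem_image.2 ⟨σ, Finset.mem_univ _, ?_⟩
    ext p
    rw [permDom_apply]
    have := congrFun (congrFun hσ (σ⁻¹ p.2)) p.1
    simp only [Function.comp_apply, Equiv.Perm.coe_inv, Equiv.apply_symm_apply] at this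
    calc dzero M (p.1, σ⁻¹ p.2) = colOf (dzero M) (σ⁻¹ p.2) p.1 := rfl
      _ = colOf d p.2 p.1 := this
      _ = d p := rfl

/-- orbit sum: the monomial symmetric function attached to `M` -/
noncomputable def orbitSum (K : Type*) [CommRing K] (m n : ℕ) (M : Multiset (Fin m → ℕ)) :
    MvPolynomial (Fin m × Fin n) K :=
  ∑ d ∈ orbitF M, monomial d 1

lemma coeff_orbitSum {M : Multiset (Fin m → ℕ)} (hM : Multiset.card M ≤ n)
    (h0 : ∀ a ∈ M, a ≠ 0) (d : (Fin m × Fin n) →₀ ℕ) :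
    coeff d (orbitSum K m n M) = if piD d = M then 1 else 0 := by
  classical
  rw [orbitSum, coeff_sum]
  have : ∀ d' ∈ orbitF M, coeff d (monomial d' (1:K)) = if d' = d then 1 else 0 := by
    intro d' _; rw [coeff_monomial]
  rw [Finset.sum_congr rfl this, Finset.sum_ite_eq' (orbitF M) d (fun _ => (1:K))]
  simp only [mem_orbitF hM h0]


lemma constOn_orbitSum {M : Multiset (Fin m → ℕ)} (hM : Multiset.card M ≤ n)
    (h0 : ∀ a ∈ M, a ≠ 0) : ConstOn (orbitSum K m n M) := fun d d' h => by
  rw [coeff_orbitSum hM h0, coeff_orbitSum hM h0, h]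

open scoped Classical in
lemma decomp {f : MvPolynomial (Fin m × Fin n) K} (hf : ConstOn f) :
    f = ∑ M ∈ f.support.image piD, coeff (dzero M) f • orbitSum K m n M := by
  apply MvPolynomial.ext
  intro d
  rw [coeff_sum]
  have hterm : ∀ M ∈ f.support.image piD,
      coeff d (coeff (dzero M) f • orbitSum K m n M)
        = if piD d = M then coeff (dzero M) f else 0 := by
    intro M hM
    obtain ⟨d0, _, rfl⟩ := Finset.mem_image.1 hM
    rw [coeff_smul, coeff_orbitSum (piD_card_le d0) (piD_nonzero d0), smul_eq_mul,
      mul_ite, mul_one, mul_zero]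
  rw [Finset.sum_congr rfl hterm,
    Finset.sum_ite_eq (f.support.image piD) (piD d) (fun M => coeff (dzero M) f)]
  by_cases h : piD d ∈ f.support.image piD
  · rw [if_pos h]
    exact hf d (dzero (piD d)) (by rw [piD_dzero _ (piD_card_le d) (piD_nonzero d)])
  · rw [if_neg h]
    by_contra hne
    exact h (Finset.mem_image.2 ⟨d, mem_support_iff.2 (fun h' => hne (h' ▸ rfl)), rfl⟩)


lemma isMultiSymm_sigmaMon (l : ℕ) (a : Fin m → ℕ) :
    IsMultiSymm (sigmaMon K m n l a) := by
  intro σ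
  unfold sigmaMon
  rw [map_sum]
  refine Finset.sum_nbij' (fun S => S.image σ) (fun S => S.image σ.symm) ?_ ?_ ?_ ?_ ?_
  · intro S hS
    rw [Finset.mem_powersetCard_univ] at hS ⊢
    rw [Finset.card_image_of_injective _ σ.injective, hS]
  · intro S hS
    rw [Finset.mem_powersetCard_univ] at hS ⊢
    rw [Finset.card_image_of_injective _ σ.symm.injective, hS]
  · intro S _
    simp [Finset.image_image, Function.comp]
  · intro S _
    simp [Finset.image_image, Function.comp]
  · intro S _
    rw [map_prod]
    rw [Finset.prod_image (fun x _ y _ h => σ.injective h)]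
    refine Finset.prod_congr rfl fun j _ => ?_
    rw [map_prod]
    refine Finset.prod_congr rfl fun i _ => ?_
    rw [map_pow, rename_X]

/-- the submodule of multisymmetric polynomials -/
def symmSubmodule (K : Type*) [CommRing K] (m n : ℕ) :
    Submodule K (MvPolynomial (Fin m × Fin n) K) where
  carrier := {f | IsMultiSymm f}
  add_mem' := fun hf hg σ => by rw [map_add, hf σ, hg σ]
  zero_mem' := fun σ => by rw [map_zero]
  smul_mem' := fun c f hf σ => by
    rw [map_smul, hf σ]

lemma isMultiSymm_prod {ι : Type*} (s : Finset ι) (g : ι → MvPolynomial (Fin m × Fin n) K)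
    (hg : ∀ x ∈ s, IsMultiSymm (g x)) : IsMultiSymm (∏ x ∈ s, g x) := fun σ => by
  rw [map_prod]
  exact Finset.prod_congr rfl fun x hx => hg x hx σ


noncomputable def eS (S : Finset (Fin n)) (a : Fin m → ℕ) : (Fin m × Fin n) →₀ ℕ :=
  ∑ j ∈ S, ∑ i : Fin m, Finsupp.single (i, j) (a i)

lemma prod_monomial_one {ι : Type*} (s : Finset ι) (d : ι → ((Fin m × Fin n) →₀ ℕ)) :
    (∏ x ∈ s, (monomial (d x) (1 : K))) = monomial (∑ x ∈ s, d x) 1 := by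
  classical
  induction s using Finset.cons_induction with
  | empty => simp
  | cons a s ha ih => rw [Finset.prod_cons, Finset.sum_cons, ih, monomial_mul, one_mul]

lemma monomial_eS (S : Finset (Fin n)) (a : Fin m → ℕ) :
    (∏ j ∈ S, ∏ i : Fin m, (X (i, j) : MvPolynomial (Fin m × Fin n) K) ^ a i)
      = monomial (eS S a) 1 := by
  have h1 : ∀ j ∈ S, (∏ i : Fin m, (X (i, j) : MvPolynomial (Fin m × Fin n) K) ^ a i)
      = monomial (∑ i : Fin m, Finsupp.single (i, j) (a i)) 1 := by
    intro j _
    rw [← prod_monomial_one]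
    exact Finset.prod_congr rfl fun i _ => X_pow_eq_monomial
  rw [Finset.prod_congr rfl h1, prod_monomial_one, eS]

lemma sigmaMon_eq (l : ℕ) (a : Fin m → ℕ) :
    sigmaMon K m n l a = ∑ S ∈ Finset.univ.powersetCard l, monomial (eS S a) 1 := by
  unfold sigmaMon
  exact Finset.sum_congr rfl fun S _ => monomial_eS S a

lemma eS_apply (S : Finset (Fin n)) (a : Fin m → ℕ) (i : Fin m) (j : Fin n) :
    eS S a (i, j) = if j ∈ S then a i else 0 := by
  classical
  rw [eS, Finsupp.finset_sum_apply]
  have h1 : ∀ j' ∈ S, (∑ i' : Fin m, Finsupp.single (i', j') (a i')) (i, j)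
      = if j' = j then a i else 0 := by
    intro j' _
    rw [Finsupp.finset_sum_apply]
    by_cases hj : j' = j
    · subst hj
      rw [Finset.sum_congr rfl (fun i' _ => Finsupp.single_apply),
        if_pos rfl]
      simp only [Prod.mk.injEq, and_true]
      rw [Finset.sum_ite_eq' Finset.univ i a, if_pos (Finset.mem_univ i)]
    · rw [if_neg hj]
      refine Finset.sum_eq_zero fun i' _ => ?_
      rw [Finsupp.single_apply, if_neg]
      simp [Prod.ext_iff, hj]
  rw [Finset.sum_congr rfl h1, Finset.sum_ite_eq' S j (fun _ => a i)]

noncomputable def Dq (M : Multiset (Fin m → ℕ)) (q : {a // a ∈ M.toFinset} → Finset (Fin n)) :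
    (Fin m × Fin n) →₀ ℕ :=
  ∑ a : {a // a ∈ M.toFinset}, eS (q a) a.1

lemma P_expand (M : Multiset (Fin m → ℕ)) :
    (∏ a ∈ M.toFinset, sigmaMon K m n (M.count a) a)
      = ∑ q ∈ Fintype.piFinset (fun a : {a // a ∈ M.toFinset} =>
          Finset.univ.powersetCard (M.count a.1)),
        monomial (Dq M q) 1 := by
  classical
  rw [← Finset.prod_coe_sort]
  simp only [sigmaMon_eq]
  rw [Finset.prod_univ_sum]
  exact Finset.sum_congr rfl fun q _ => prod_monomial_one _ _

lemma Dq_apply (M : Multiset (Fin m → ℕ)) (q : {a // a ∈ M.toFinset} → Finset (Fin n))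
    (i : Fin m) (j : Fin n) :
    Dq M q (i, j) = ∑ a ∈ Finset.univ.filter (fun a : {a // a ∈ M.toFinset} => j ∈ q a),
      a.1 i := by
  classical
  rw [Dq, Finsupp.finset_sum_apply]
  rw [Finset.sum_congr rfl (fun a _ => eS_apply (q a) a.1 i j)]
  exact (Finset.sum_filter _ _).symm


open Finset in
lemma card_piD (d : (Fin m × Fin n) →₀ ℕ) :
    Multiset.card (piD d) = (Finset.univ.filter (fun j => colOf d j ≠ 0)).card := by
  classical
  rw [piD, colm, Multiset.filter_map, Multiset.card_map]
  rfl

open Finset in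
lemma count_colm (d : (Fin m × Fin n) →₀ ℕ) (v : Fin m → ℕ) :
    Multiset.count v (colm d) = (Finset.univ.filter (fun j => v = colOf d j)).card := by
  classical
  rw [colm, Multiset.count_map]
  rfl


section Counting
open Finset
variable (M : Multiset (Fin m → ℕ)) (q : {a // a ∈ M.toFinset} → Finset (Fin n))

/-- the number of parts containing column `j` -/
def nq (j : Fin n) : ℕ := (Finset.univ.filter (fun a : {a // a ∈ M.toFinset} => j ∈ q a)).card

lemma sum_nq (hq : ∀ a, (q a).card = M.count a.1) :
    ∑ j : Fin n, nq M q j = Multiset.card M := by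
  classical
  unfold nq
  simp only [Finset.card_filter]
  rw [Finset.sum_comm]
  have h1 : ∀ a : {a // a ∈ M.toFinset},
      (∑ j : Fin n, if j ∈ q a then 1 else 0) = M.count a.1 := by
    intro a
    rw [← Finset.card_filter, Finset.filter_univ_mem, hq a]
  rw [Finset.sum_congr rfl fun a _ => h1 a, Finset.sum_coe_sort _ (fun a => M.count a),
    Multiset.toFinset_sum_count_eq]

lemma colOf_Dq_eq_zero (j : Fin n) (h : ∀ a, j ∉ q a) : colOf (Dq M q) j = 0 := by
  funext i
  have : Dq M q (i, j) = 0 := by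
    rw [Dq_apply]
    rw [Finset.filter_false_of_mem (fun a _ => h a), Finset.sum_empty]
  exact this

lemma nq_pos_of_col_ne_zero (j : Fin n) (h : colOf (Dq M q) j ≠ 0) : 1 ≤ nq M q j := by
  refine Finset.card_pos.2 ?_
  rcases Classical.em (∃ a, j ∈ q a) with ⟨a, ha⟩ | hno
  · exact ⟨a, Finset.mem_filter.2 ⟨Finset.mem_univ _, ha⟩⟩
  · exact absurd (colOf_Dq_eq_zero M q j (fun a ha => hno ⟨a, ha⟩)) h

lemma card_piD_Dq_le : Multiset.card (piD (Dq M q)) ≤ ∑ j : Fin n, nq M q j := by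
  classical
  rw [card_piD, Finset.card_filter]
  refine Finset.sum_le_sum fun j _ => ?_
  by_cases h : colOf (Dq M q) j ≠ 0
  · rw [if_pos h]; exact nq_pos_of_col_ne_zero M q j h
  · rw [if_neg h]; exact Nat.zero_le _

lemma card_piD_Dq_lt (hq : ∀ a, (q a).card = M.count a.1)
    (j₀ : Fin n) (h2 : 2 ≤ nq M q j₀) :
    Multiset.card (piD (Dq M q)) < Multiset.card M := by
  classical
  rw [card_piD, Finset.card_filter, ← sum_nq M q hq]
  refine Finset.sum_lt_sum (fun j _ => ?_) ⟨j₀, Finset.mem_univ _, ?_⟩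
  · by_cases h : colOf (Dq M q) j ≠ 0
    · rw [if_pos h]; exact nq_pos_of_col_ne_zero M q j h
    · rw [if_neg h]; exact Nat.zero_le _
  · by_cases h : colOf (Dq M q) j₀ ≠ 0
    · rw [if_pos h]; omega
    · rw [if_neg h]; omega

lemma colOf_Dq_of_mem (hdisj : ∀ j, nq M q j ≤ 1) {j : Fin n}
    {a : {a // a ∈ M.toFinset}} (ha : j ∈ q a) : colOf (Dq M q) j = a.1 := by
  classical
  have hmem : a ∈ Finset.univ.filter (fun a : {a // a ∈ M.toFinset} => j ∈ q a) :=
    Finset.mem_filter.2 ⟨Finset.mem_univ _, ha⟩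
  have hsingle : Finset.univ.filter (fun a : {a // a ∈ M.toFinset} => j ∈ q a) = {a} := by
    apply Finset.eq_singleton_iff_unique_mem.2
    exact ⟨hmem, fun b hb => Finset.card_le_one.1 (hdisj j) b hb a hmem⟩
  funext i
  have : Dq M q (i, j) = a.1 i := by
    rw [Dq_apply, hsingle, Finset.sum_singleton]
  exact this


lemma piD_Dq_disjoint (h0 : ∀ a ∈ M, a ≠ 0) (hq : ∀ a, (q a).card = M.count a.1)
    (hdisj : ∀ j, nq M q j ≤ 1) : piD (Dq M q) = M := by
  classical
  refine Multiset.ext.2 fun v => ?_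
  rw [piD, Multiset.count_filter]
  by_cases hv : v ≠ 0
  · rw [if_pos hv, count_colm]
    by_cases hvM : v ∈ M.toFinset
    · have : Finset.univ.filter (fun j => v = colOf (Dq M q) j) = q ⟨v, hvM⟩ := by
        ext j
        simp only [Finset.mem_filter, Finset.mem_univ, true_and]
        constructor
        · intro hj
          obtain ⟨a, ha⟩ : ∃ a, j ∈ q a := by
            by_contra hno
            push_neg at hno
            exact hv (by rw [hj, colOf_Dq_eq_zero M q j hno])
          have hcol := colOf_Dq_of_mem M q hdisj ha
          have hav : a = (⟨v, hvM⟩ : {a // a ∈ M.toFinset}) :=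
            Subtype.ext (by rw [← hcol, ← hj])
          rwa [← hav]
        · intro hj
          rw [colOf_Dq_of_mem M q hdisj hj]
      rw [this, hq ⟨v, hvM⟩]
    · have h1 : Finset.univ.filter (fun j => v = colOf (Dq M q) j) = ∅ := by
        refine Finset.filter_false_of_mem fun j _ => ?_
        intro hj
        obtain ⟨a, ha⟩ : ∃ a, j ∈ q a := by
          by_contra hno
          push_neg at hno
          exact hv (by rw [hj, colOf_Dq_eq_zero M q j hno])
        have hcol := colOf_Dq_of_mem M q hdisj ha
        exact hvM (by rw [hj, hcol]; exact a.2)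
      rw [h1, Finset.card_empty]
      exact (Multiset.count_eq_zero.2 fun hvm => hvM (Multiset.mem_toFinset.2 hvm)).symm
  · rw [if_neg hv]
    push_neg at hv
    exact (Multiset.count_eq_zero.2 fun hvm => (h0 v hvm) hv).symm

lemma piD_Dq_cases (h0 : ∀ a ∈ M, a ≠ 0) (hq : ∀ a, (q a).card = M.count a.1) :
    piD (Dq M q) = M ∨ Multiset.card (piD (Dq M q)) < Multiset.card M := by
  classical
  by_cases hdisj : ∀ j, nq M q j ≤ 1
  · exact Or.inl (piD_Dq_disjoint M q h0 hq hdisj)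
  · push_neg at hdisj
    obtain ⟨j₀, hj₀⟩ := hdisj
    exact Or.inr (card_piD_Dq_lt M q hq j₀ (by omega))

end Counting


section Unique
open Finset
variable (M : Multiset (Fin m → ℕ))

lemma colOf_dzero_mem (hM : Multiset.card M ≤ n) (j : Fin n) :
    colOf (dzero M : (Fin m × Fin n) →₀ ℕ) j = 0 ∨ colOf (dzero M : (Fin m × Fin n) →₀ ℕ) j ∈ M := by
  have hmem : colOf (dzero M : (Fin m × Fin n) →₀ ℕ) j ∈ colm (dzero M : (Fin m × Fin n) →₀ ℕ) :=
    Multiset.mem_map.2 ⟨j, Finset.mem_univ_val j, rfl⟩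
  rw [colm_dzero M hM, Multiset.mem_add] at hmem
  rcases hmem with h | h
  · exact Or.inr h
  · exact Or.inl (Multiset.eq_of_mem_replicate h)

/-- the canonical choice function -/
noncomputable def qzero (n : ℕ) : {a // a ∈ M.toFinset} → Finset (Fin n) :=
  fun a => Finset.univ.filter (fun j => a.1 = colOf (dzero M : (Fin m × Fin n) →₀ ℕ) j)

lemma card_qzero (hM : Multiset.card M ≤ n) (h0 : ∀ a ∈ M, a ≠ 0)
    (a : {a // a ∈ M.toFinset}) : (qzero M n a).card = M.count a.1 := by
  classical
  rw [qzero, ← count_colm, colm_dzero M hM, Multiset.count_add, Multiset.count_replicate,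
    if_neg (fun h => (h0 a.1 (Multiset.mem_toFinset.1 a.2)) h.symm), add_zero]

lemma Dq_qzero (hM : Multiset.card M ≤ n) (h0 : ∀ a ∈ M, a ≠ 0) :
    Dq M (qzero M n) = dzero M := by
  classical
  ext p
  obtain ⟨i, j⟩ := p
  rw [Dq_apply]
  rcases colOf_dzero_mem M hM j with hc | hc
  · have h1 : Finset.univ.filter
        (fun a : {a // a ∈ M.toFinset} => j ∈ qzero M n a) = ∅ := by
      refine Finset.filter_false_of_mem fun a _ => ?_
      intro hj
      rw [qzero, Finset.mem_filter] at hj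
      exact (h0 a.1 (Multiset.mem_toFinset.1 a.2)) (by rw [hj.2, hc])
    rw [h1, Finset.sum_empty]
    exact (congrFun hc i).symm
  · have hmem : colOf (dzero M : (Fin m × Fin n) →₀ ℕ) j ∈ M.toFinset := Multiset.mem_toFinset.2 hc
    have h1 : Finset.univ.filter (fun a : {a // a ∈ M.toFinset} => j ∈ qzero M n a)
        = {⟨colOf (dzero M : (Fin m × Fin n) →₀ ℕ) j, hmem⟩} := by
      ext a
      simp only [Finset.mem_filter, Finset.mem_univ, true_and, Finset.mem_singleton, qzero]
      constructor
      · intro hj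
        exact Subtype.ext hj
      · intro ha
        rw [ha]
    rw [h1, Finset.sum_singleton]
    rfl

lemma qzero_unique (hM : Multiset.card M ≤ n) (h0 : ∀ a ∈ M, a ≠ 0)
    (q : {a // a ∈ M.toFinset} → Finset (Fin n)) (hq : ∀ a, (q a).card = M.count a.1)
    (hD : Dq M q = dzero M) : q = qzero M n := by
  classical
  have hpi : piD (Dq M q) = M := by rw [hD, piD_dzero M hM h0]
  have hdisj : ∀ j, nq M q j ≤ 1 := by
    by_contra hno
    push_neg at hno
    obtain ⟨j₀, hj₀⟩ := hno
    have := card_piD_Dq_lt M q hq j₀ (by omega)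
    rw [hpi] at this
    omega
  funext a
  refine Finset.eq_of_subset_of_card_le ?_ ?_
  · intro j hj
    have hcol := colOf_Dq_of_mem M q hdisj hj
    rw [hD] at hcol
    rw [qzero]
    exact Finset.mem_filter.2 ⟨Finset.mem_univ _, hcol.symm⟩
  · rw [card_qzero M hM h0 a, hq a]

lemma coeff_dzero_P (hM : Multiset.card M ≤ n) (h0 : ∀ a ∈ M, a ≠ 0) :
    coeff (dzero M) (∏ a ∈ M.toFinset, sigmaMon K m n (M.count a) a) = 1 := by
  classical
  rw [P_expand, coeff_sum]
  have h1 : ∀ q ∈ Fintype.piFinset (fun a : {a // a ∈ M.toFinset} =>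
      Finset.univ.powersetCard (M.count a.1)),
      coeff (dzero M) (monomial (Dq M q) (1:K)) = if q = qzero M n then 1 else 0 := by
    intro q hqmem
    rw [coeff_monomial]
    have hq : ∀ a, (q a).card = M.count a.1 := by
      intro a
      have := (Fintype.mem_piFinset.1 hqmem) a
      exact Finset.mem_powersetCard_univ.1 this
    congr 1
    simp only [eq_iff_iff]
    constructor
    · intro hD
      exact qzero_unique M hM h0 q hq hD
    · intro hqq
      rw [hqq, Dq_qzero M hM h0]
  rw [Finset.sum_congr rfl h1,
    Finset.sum_ite_eq' _ (qzero M n) (fun _ => (1:K)), if_pos ?_]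
  refine Fintype.mem_piFinset.2 fun a => ?_
  rw [Finset.mem_powersetCard_univ]
  exact card_qzero M hM h0 a

lemma support_P (h0 : ∀ a ∈ M, a ≠ 0) (d : (Fin m × Fin n) →₀ ℕ)
    (hd : coeff d (∏ a ∈ M.toFinset, sigmaMon K m n (M.count a) a) ≠ (0:K)) :
    piD d = M ∨ Multiset.card (piD d) < Multiset.card M := by
  classical
  rw [P_expand, coeff_sum] at hd
  obtain ⟨q, hqmem, hne⟩ := Finset.exists_ne_zero_of_sum_ne_zero hd
  have hq : ∀ a, (q a).card = M.count a.1 := fun a =>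
    Finset.mem_powersetCard_univ.1 ((Fintype.mem_piFinset.1 hqmem) a)
  have hDd : Dq M q = d := by
    by_contra hne'
    rw [coeff_monomial, if_neg hne'] at hne
    exact hne rfl
  rw [← hDd]
  exact piD_Dq_cases M q h0 hq

end Unique
section Main
variable (K : Type*) [CommRing K] (m n : ℕ)

/-- the spanning family of products of elementary multisymmetric polynomials -/
noncomputable def F (M : {M : Multiset (Fin m → ℕ) // M.card ≤ n ∧ ∀ a ∈ M, a ≠ 0}) :
    MvPolynomial (Fin m × Fin n) K :=
  ∏ a ∈ M.1.toFinset, sigmaMon K m n (M.1.count a) a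

lemma isMultiSymm_F (M : {M : Multiset (Fin m → ℕ) // M.card ≤ n ∧ ∀ a ∈ M, a ≠ 0}) :
    IsMultiSymm (F K m n M) :=
  isMultiSymm_prod _ _ fun a _ => isMultiSymm_sigmaMon _ a

lemma orbitSum_mem_span : ∀ (k : ℕ) (M : Multiset (Fin m → ℕ))
    (hM : Multiset.card M ≤ n) (h0 : ∀ a ∈ M, a ≠ 0), Multiset.card M ≤ k →
    orbitSum K m n M ∈ Submodule.span K (Set.range (F K m n)) := by
  intro k
  induction k using Nat.strong_induction_on with
  | _ k ih =>
    intro M hM h0 hk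
    have hFmem : F K m n ⟨M, hM, h0⟩ ∈ Submodule.span K (Set.range (F K m n)) :=
      Submodule.subset_span ⟨_, rfl⟩
    set g := F K m n ⟨M, hM, h0⟩ - orbitSum K m n M with hg
    have hconstF : ConstOn (F K m n ⟨M, hM, h0⟩) :=
      constOn_of_isMultiSymm (isMultiSymm_F K m n _)
    have hconst : ConstOn g := constOn_sub hconstF (constOn_orbitSum hM h0)
    have hsupp : ∀ d ∈ g.support, Multiset.card (piD d) < Multiset.card M := by
      intro d hd
      rw [mem_support_iff] at hd
      have hco : coeff d g = coeff d (F K m n ⟨M, hM, h0⟩) - (if piD d = M then 1 else 0) := by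
        rw [hg, coeff_sub, coeff_orbitSum hM h0]
      by_cases hPi : piD d = M
      · exfalso
        have h1 : coeff d (F K m n ⟨M, hM, h0⟩) = coeff (dzero M) (F K m n ⟨M, hM, h0⟩) :=
          hconstF d (dzero M) (by rw [hPi, piD_dzero M hM h0])
        have h2 : coeff (dzero M) (F K m n ⟨M, hM, h0⟩) = 1 := coeff_dzero_P M hM h0
        rw [hco, if_pos hPi, h1, h2, sub_self] at hd
        exact hd rfl
      · rw [hco, if_neg hPi, sub_zero] at hd
        rcases support_P M h0 d hd with h | h
        · exact absurd h hPi
        · exact h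
    have hgspan : g ∈ Submodule.span K (Set.range (F K m n)) := by
      rw [decomp hconst]
      refine Submodule.sum_mem _ fun M' hM' => ?_
      obtain ⟨d, hd, rfl⟩ := Finset.mem_image.1 hM'
      refine Submodule.smul_mem _ _ ?_
      have hlt := hsupp d hd
      exact ih (Multiset.card (piD d)) (lt_of_lt_of_le hlt hk) (piD d)
        (piD_card_le d) (piD_nonzero d) le_rfl
    have hOS : orbitSum K m n M = F K m n ⟨M, hM, h0⟩ - g := by rw [hg]; ring
    rw [hOS]
    exact Submodule.sub_mem _ hFmem hgspan

lemma span_eq :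
    (Submodule.span K (Set.range (F K m n)) :
      Set (MvPolynomial (Fin m × Fin n) K)) = {f | IsMultiSymm f} := by
  apply Set.Subset.antisymm
  · have hle : Submodule.span K (Set.range (F K m n)) ≤ symmSubmodule K m n := by
      rw [Submodule.span_le]
      rintro _ ⟨M, rfl⟩
      exact isMultiSymm_F K m n M
    exact hle
  · intro f hf
    have hconst : ConstOn f := constOn_of_isMultiSymm hf
    rw [decomp hconst]
    refine Submodule.sum_mem _ fun M' hM' => ?_
    obtain ⟨d, hd, rfl⟩ := Finset.mem_image.1 hM'
    exact Submodule.smul_mem _ _ (orbitSum_mem_span K m n (Multiset.card (piD d)) (piD d)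
      (piD_card_le d) (piD_nonzero d) le_rfl)

lemma linIndep : LinearIndependent K (F K m n) := by
  rw [linearIndependent_iff]
  intro l hl
  by_contra hne
  have hsupp : l.support.Nonempty := Finsupp.support_nonempty_iff.2 hne
  obtain ⟨M₀, hM₀mem, hmax⟩ :=
    Finset.exists_max_image l.support (fun M => Multiset.card M.1) hsupp
  have h0 : coeff (dzero M₀.1) (Finsupp.linearCombination K (F K m n) l) = l M₀ := by
    rw [Finsupp.linearCombination_apply, Finsupp.sum, coeff_sum]
    have hterm : ∀ M ∈ l.support,
        coeff (dzero M₀.1) (l M • F K m n M) = if M = M₀ then l M else 0 := by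
      intro M hMs
      rw [coeff_smul, smul_eq_mul]
      by_cases he : M = M₀
      · rw [he, if_pos rfl]
        have h1 : coeff (dzero M₀.1) (F K m n M₀) = 1 :=
          coeff_dzero_P M₀.1 M₀.2.1 M₀.2.2
        rw [h1, mul_one]
      · rw [if_neg he]
        have hc0 : coeff (dzero M₀.1) (F K m n M) = 0 := by
          by_contra hc
          rcases support_P M.1 M.2.2 _ hc with h | h
          · rw [piD_dzero M₀.1 M₀.2.1 M₀.2.2] at h
            exact he (Subtype.ext h.symm)
          · rw [piD_dzero M₀.1 M₀.2.1 M₀.2.2] at h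
            exact absurd h (not_lt.2 (hmax M hMs))
        rw [hc0, mul_zero]
    rw [Finset.sum_congr rfl hterm,
      Finset.sum_ite_eq' l.support M₀ (fun M => l M), if_pos hM₀mem]
  rw [hl, coeff_zero] at h0
  exact (Finsupp.mem_support_iff.1 hM₀mem) h0.symm

end Main
end SigmaBasisAux


/-- Over an arbitrary commutative ring `K`, the products `σ_{r_1}(w_1)⋯σ_{r_d}(w_d)`,
where `{w_1, …, w_d; r_1, …, r_d}` ranges over multisets of nonempty monomials in
`x(1), …, x(m)` (with distinct `w_i` having multiplicities `r_i`) of total multiplicity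
`r_1 + ⋯ + r_d ≤ n`, form a free `K`-module basis of the ring of multisymmetric
functions `K[V^m]^{S_n}`. -/
theorem sigma_products_free_basis
    (K : Type*) [CommRing K] (m n : ℕ) :
    LinearIndependent K
      (fun M : {M : Multiset (Fin m → ℕ) // M.card ≤ n ∧ ∀ a ∈ M, a ≠ 0} =>
        ∏ a ∈ M.1.toFinset, sigmaMon K m n (M.1.count a) a) ∧
    (Submodule.span K (Set.range
      (fun M : {M : Multiset (Fin m → ℕ) // M.card ≤ n ∧ ∀ a ∈ M, a ≠ 0} =>
        ∏ a ∈ M.1.toFinset, sigmaMon K m n (M.1.count a) a)) :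
      Set (MvPolynomial (Fin m × Fin n) K)) = {f | IsMultiSymm f} :=
  ⟨SigmaBasisAux.linIndep K m n, SigmaBasisAux.span_eq K m n⟩
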